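/- Let m > 1 be an integer and let x, y be coprime integers with y² − 4x^m < 0. Set k = ℚ(√(y² − 4x^m)) and let z = √(y² − 4x^m) ∈ k. Then (y+z)/2 and (y−z)/2 lie in 𝒪_k, are coprime as ideals of 𝒪_k, and the ideal ((y+z)/2) is the m-th power of an ideal 𝔞 of 𝒪_k. -/

import Mathlib

/-- For `m > 1` and coprime integers `x, y` with `y² − 4x^m < 0`, in the imaginary
quadratic field `K = ℚ(√(y² − 4x^m))` with `z = √(y² − 4x^m)`:  `(y+z)/2` and
`(y−z)/2` are algebraic integers generating coprime ideals, and the ideal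
`((y+z)/2)` is an `m`-th power of an ideal of `𝒪_K`. -/
theorem stmt_5 (m : ℕ) (hm : 1 < m) (x y : ℤ) (hcop : IsCoprime x y)
    (hneg : y ^ 2 - 4 * x ^ m < 0)
    (K : Type*) [Field K] [NumberField K] (z : K)
    (hz : z ^ 2 = (y : K) ^ 2 - 4 * (x : K) ^ m)
    (hgen : IntermediateField.adjoin ℚ {z} = ⊤) :
    ∃ α β : NumberField.RingOfIntegers K,
      algebraMap (NumberField.RingOfIntegers K) K α = ((y : K) + z) / 2 ∧
      algebraMap (NumberField.RingOfIntegers K) K β = ((y : K) - z) / 2 ∧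
      Ideal.span {α} ⊔ Ideal.span {β} = ⊤ ∧
      ∃ I : Ideal (NumberField.RingOfIntegers K), Ideal.span {α} = I ^ m := by
  set R := NumberField.RingOfIntegers K
  have hpoly : ∀ w : K, w ^ 2 - (y : K) * w + (x : K) ^ m = 0 → IsIntegral ℤ w := by
    intro w hw
    refine ⟨Polynomial.X ^ 2 - Polynomial.C y * Polynomial.X + Polynomial.C (x ^ m), ?_, ?_⟩
    · monicity!
    · simp only [Polynomial.eval₂_add, Polynomial.eval₂_sub, Polynomial.eval₂_mul,
        Polynomial.eval₂_pow, Polynomial.eval₂_X, Polynomial.eval₂_C]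
      push_cast
      exact hw
  have hαK : (((y : K) + z) / 2) ^ 2 - (y : K) * (((y : K) + z) / 2) + (x : K) ^ m = 0 := by
    linear_combination hz / 4
  have hβK : (((y : K) - z) / 2) ^ 2 - (y : K) * (((y : K) - z) / 2) + (x : K) ^ m = 0 := by
    linear_combination hz / 4
  set α : R := ⟨_, hpoly _ hαK⟩ with hα
  set β : R := ⟨_, hpoly _ hβK⟩ with hβ
  have hadd : α + β = (y : R) := NumberField.RingOfIntegers.coe_injective (by
    rw [map_add, map_intCast]
    show ((y : K) + z) / 2 + ((y : K) - z) / 2 = (y : K)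
    ring)
  have hmul : α * β = (x : R) ^ m := NumberField.RingOfIntegers.coe_injective (by
    rw [map_mul, map_pow, map_intCast]
    show ((y : K) + z) / 2 * (((y : K) - z) / 2) = (x : K) ^ m
    linear_combination -hz / 4)
  have hsup : Ideal.span {α} ⊔ Ideal.span {β} = ⊤ := by
    have hc2 : IsCoprime ((x : ℤ) ^ m) y := hcop.pow_left
    obtain ⟨a, b, hab⟩ := hc2.symm
    have hab' : b * x ^ m + a * y = 1 := by linarith
    have h1 : (1 : R) = (b : R) * β * α + ((a : R) * α + (a : R) * β) := by
      have h2 : ((b * x ^ m + a * y : ℤ) : R) = 1 := by exact_mod_cast hab'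
      rw [← h2]
      rw [Int.cast_add, Int.cast_mul, Int.cast_mul, Int.cast_pow, ← hmul, ← hadd]
      ring
    rw [Ideal.eq_top_iff_one, h1]
    exact add_mem (Ideal.mem_sup_left (Ideal.mul_mem_left _ _ (Ideal.mem_span_singleton_self _)))
      (add_mem (Ideal.mem_sup_left (Ideal.mul_mem_left _ _ (Ideal.mem_span_singleton_self _)))
        (Ideal.mem_sup_right (Ideal.mul_mem_left _ _ (Ideal.mem_span_singleton_self _))))
  refine ⟨α, β, rfl, rfl, hsup, ?_⟩
  have hmuleq : Ideal.span {α} * Ideal.span {β} = Ideal.span {(x : R)} ^ m := by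
    rw [Ideal.span_singleton_mul_span_singleton, hmul, Ideal.span_singleton_pow]
  have hgcd : IsUnit (gcd (Ideal.span {α}) (Ideal.span {β})) := by
    rw [Ideal.isUnit_iff, eq_top_iff, ← hsup]
    exact sup_le (Ideal.le_of_dvd (gcd_dvd_left _ _)) (Ideal.le_of_dvd (gcd_dvd_right _ _))
  exact exists_eq_pow_of_mul_eq_pow hgcd hmuleq
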